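/- Let b* be the baseline b*_t(s,a) = q_{π,t}(s,a). For every baseline function b, every time t, and every (s,a): u^b_{π,t}(s,a) ≥ u^{b*}_{π,t}(s,a), and consequently Λ^b ⊆ Λ^{b*}, where Λ^c = {μ : ∀t,s,a, μ_t(a|s)=0 ⟹ π_t(a|s)·u^c_{π,t}(s,a)=0} for a baseline c. -/

import Mathlib

open Finset

namespace DOpt

variable {S A : Type}

/-- A time-indexed policy: for each time step and state, a probability distribution on actions. -/
def IsPolicy [Fintype A] (μ : ℕ → S → A → ℝ) : Prop :=
  ∀ t s, (∀ a, 0 ≤ μ t s a) ∧ ∑ a, μ t s a = 1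

/-- A transition probability kernel on the finite state space. -/
def IsKernel [Fintype S] (p : S → A → S → ℝ) : Prop :=
  ∀ s a, (∀ s', 0 ≤ p s a s') ∧ ∑ s', p s a s' = 1

/-- Action value `q_{π,t}(s,a)` computed with `n` remaining transitions after time `t`
(`n = T - 1 - t` in a horizon-`T` MDP). -/
noncomputable def qval [Fintype S] [Fintype A] (p : S → A → S → ℝ) (π : ℕ → S → A → ℝ)
    (r : S → A → ℝ) : ℕ → ℕ → S → A → ℝ
  | 0, _, s, a => r s a
  | n + 1, t, s, a =>
      r s a + ∑ s', p s a s' * ∑ a', π (t + 1) s' a' * qval p π r n (t + 1) s' a'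

/-- `q_{π,t}(s,a)` in the horizon-`T` MDP. -/
noncomputable def qf [Fintype S] [Fintype A] (T : ℕ) (p : S → A → S → ℝ)
    (π : ℕ → S → A → ℝ) (r : S → A → ℝ) (t : ℕ) (s : S) (a : A) : ℝ :=
  qval p π r (T - 1 - t) t s a

/-- `v_{π,t}(s) = Σ_a π_t(a|s) q_{π,t}(s,a)`. -/
noncomputable def vf [Fintype S] [Fintype A] (T : ℕ) (p : S → A → S → ℝ)
    (π : ℕ → S → A → ℝ) (r : S → A → ℝ) (t : ℕ) (s : S) : ℝ :=
  ∑ a, π t s a * qf T p π r t s a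

/-- `ν_{π,t}(s,a) = Var_{s' ∼ p(·|s,a)}(v_{π,t+1}(s'))` for `t ≤ T-2`, and `0` at `t = T-1`. -/
noncomputable def nuf [Fintype S] [Fintype A] (T : ℕ) (p : S → A → S → ℝ)
    (π : ℕ → S → A → ℝ) (r : S → A → ℝ) (t : ℕ) (s : S) (a : A) : ℝ :=
  if t + 2 ≤ T then
    (∑ s', p s a s' * (vf T p π r (t + 1) s') ^ 2) -
      (∑ s', p s a s' * vf T p π r (t + 1) s') ^ 2
  else 0

/-- Trajectories with `n` further transitions after the first action:
`(a_t, s_{t+1}, a_{t+1}, …, s_{t+n}, a_{t+n})`. -/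
def Traj (S A : Type) : ℕ → Type
  | 0 => A
  | n + 1 => A × S × Traj S A n

/-- Expectation, over trajectories generated by the behavior policy `μ` starting at time `t`
in state `s` with `n` further transitions, of a function `f` of the trajectory. -/
noncomputable def Exp [Fintype S] [Fintype A] (p : S → A → S → ℝ) (μ : ℕ → S → A → ℝ) :
    (n : ℕ) → ℕ → S → (Traj S A n → ℝ) → ℝ
  | 0, t, s, f => ∑ a, μ t s a * f a
  | n + 1, t, s, f =>
      ∑ a, μ t s a * ∑ s', p s a s' * Exp p μ n (t + 1) s' (fun τ => f (a, s', τ))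

/-- Conditional variance of a function of the trajectory, given `S_t = s`. -/
noncomputable def Var [Fintype S] [Fintype A] (p : S → A → S → ℝ) (μ : ℕ → S → A → ℝ)
    (n : ℕ) (t : ℕ) (s : S) (f : Traj S A n → ℝ) : ℝ :=
  Exp p μ n t s (fun τ => (f τ) ^ 2) - (Exp p μ n t s f) ^ 2

/-- `b̄_t(s) = Σ_a π_t(a|s) b_t(s,a)`. -/
noncomputable def bbar [Fintype A] (π : ℕ → S → A → ℝ) (b : ℕ → S → A → ℝ)
    (t : ℕ) (s : S) : ℝ :=
  ∑ a, π t s a * b t s a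

/-- The per-decision importance-sampling estimator `G^b` with baseline `b`, target policy `π`
and behavior policy `μ`, as a function of the trajectory from time `t` (with `n` further
transitions, `n = T - 1 - t`). -/
noncomputable def Gest [Fintype S] [Fintype A] (π μ : ℕ → S → A → ℝ) (r : S → A → ℝ)
    (b : ℕ → S → A → ℝ) : (n : ℕ) → ℕ → S → Traj S A n → ℝ
  | 0, t, s, a => (π t s a / μ t s a) * (r s a - b t s a) + bbar π b t s
  | n + 1, t, s, (a, s', τ) =>
      (π t s a / μ t s a) * (r s a + Gest π μ r b n (t + 1) s' τ - b t s a) + bbar π b t s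

/-- Normalization of a weight vector into a probability distribution; the uniform distribution
when the total weight vanishes. -/
noncomputable def normPol [Fintype A] (w : A → ℝ) (a : A) : ℝ :=
  if (∑ a', w a') = 0 then ((Fintype.card A : ℝ))⁻¹ else w a / ∑ a', w a'

/-- `u_{π,t}(s,a)` (with baseline `b`), defined backwards in time together with the optimal
behavior policy `μ*`; the first argument is the number `n = T - 1 - t` of remaining
transitions after time `t`. -/
noncomputable def uAux [Fintype S] [Fintype A] (T : ℕ) (p : S → A → S → ℝ)
    (π : ℕ → S → A → ℝ) (r : S → A → ℝ) (b : ℕ → S → A → ℝ) :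
    ℕ → ℕ → S → A → ℝ
  | 0, t, s, a => (qf T p π r t s a - b t s a) ^ 2
  | n + 1, t, s, a =>
      (qf T p π r t s a - b t s a) ^ 2 + nuf T p π r t s a +
        ∑ s', p s a s' *
          Var p
            (fun t' s₁ a₁ => normPol (fun a₂ =>
              π t' s₁ a₂ * Real.sqrt (uAux T p π r b (n - (t' - (t + 1))) t' s₁ a₂)) a₁)
            n (t + 1) s'
            (Gest π
              (fun t' s₁ a₁ => normPol (fun a₂ =>
                π t' s₁ a₂ * Real.sqrt (uAux T p π r b (n - (t' - (t + 1))) t' s₁ a₂)) a₁)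
              r b n (t + 1) s')
  termination_by n => n
  decreasing_by all_goals omega

/-- `u_{π,t}(s,a)` in the horizon-`T` MDP, with baseline `b`. -/
noncomputable def uf [Fintype S] [Fintype A] (T : ℕ) (p : S → A → S → ℝ)
    (π : ℕ → S → A → ℝ) (r : S → A → ℝ) (b : ℕ → S → A → ℝ) (t : ℕ) (s : S) (a : A) : ℝ :=
  uAux T p π r b (T - 1 - t) t s a

/-- The optimal behavior policy `μ*_t(a|s) ∝ π_t(a|s) √(u_{π,t}(s,a))` tailored to the
baseline `b` (uniform when all the weights vanish). -/
noncomputable def mustar [Fintype S] [Fintype A] (T : ℕ) (p : S → A → S → ℝ)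
    (π : ℕ → S → A → ℝ) (r : S → A → ℝ) (b : ℕ → S → A → ℝ) (t : ℕ) (s : S) (a : A) : ℝ :=
  normPol (fun a' => π t s a' * Real.sqrt (uf T p π r b t s a')) a

/-- Conditional expectation `E[G^b(τ^μ_{t:T-1}) | S_t = s]`. -/
noncomputable def ExpG [Fintype S] [Fintype A] (T : ℕ) (p : S → A → S → ℝ)
    (π μ : ℕ → S → A → ℝ) (r : S → A → ℝ) (b : ℕ → S → A → ℝ) (t : ℕ) (s : S) : ℝ :=
  Exp p μ (T - 1 - t) t s (Gest π μ r b (T - 1 - t) t s)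

/-- Conditional variance `Var(G^b(τ^μ_{t:T-1}) | S_t = s)`. -/
noncomputable def VarG [Fintype S] [Fintype A] (T : ℕ) (p : S → A → S → ℝ)
    (π μ : ℕ → S → A → ℝ) (r : S → A → ℝ) (b : ℕ → S → A → ℝ) (t : ℕ) (s : S) : ℝ :=
  Var p μ (T - 1 - t) t s (Gest π μ r b (T - 1 - t) t s)

/-- Membership in the enlarged policy-search space
`Λ = {μ : ∀ t,s,a, μ_t(a|s) = 0 → π_t(a|s)·u_{π,t}(s,a) = 0}`. -/
def inLambda [Fintype S] [Fintype A] (T : ℕ) (p : S → A → S → ℝ)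
    (π : ℕ → S → A → ℝ) (r : S → A → ℝ) (b : ℕ → S → A → ℝ) (μ : ℕ → S → A → ℝ) : Prop :=
  ∀ t s a, t < T → μ t s a = 0 → π t s a * uf T p π r b t s a = 0


/-- The optimal baseline `b*_t(s,a) = q_{π,t}(s,a)`. -/
noncomputable def bstar [Fintype S] [Fintype A] (T : ℕ) (p : S → A → S → ℝ)
    (π : ℕ → S → A → ℝ) (r : S → A → ℝ) : ℕ → S → A → ℝ :=
  fun t s a => qf T p π r t s a

/-- The zero baseline: with it, `Gest` is the plain PDIS estimator `G^{PDIS}`. -/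
def zerob : ℕ → S → A → ℝ := fun _ _ _ => 0
section Helpers

variable {S A : Type} [Fintype S] [Fintype A]

lemma normPol_nonneg [Nonempty A] {w : A → ℝ} (hw : ∀ a, 0 ≤ w a) (a : A) :
    0 ≤ normPol w a := by
  unfold normPol
  split
  · positivity
  · exact div_nonneg (hw a) (Finset.sum_nonneg fun i _ => hw i)

lemma normPol_sum_one [Nonempty A] (w : A → ℝ) : ∑ a, normPol w a = 1 := by
  unfold normPol
  by_cases h : (∑ a', w a') = 0
  · simp only [h, if_pos]
    rw [Finset.sum_const, nsmul_eq_mul, Finset.card_univ, mul_inv_cancel₀]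
    exact_mod_cast Fintype.card_ne_zero
  · simp only [h, if_neg, not_false_iff]
    rw [← Finset.sum_div, div_self h]

lemma normPol_eq_zero [Nonempty A] {w : A → ℝ} (a : A) (h : normPol w a = 0) :
    w a = 0 := by
  unfold normPol at h
  split at h
  · exact absurd h (by
      have : (Fintype.card A : ℝ) ≠ 0 := by exact_mod_cast Fintype.card_ne_zero
      simp [this])
  · rcases div_eq_zero_iff.1 h with h1 | h1
    · exact h1
    · exact absurd h1 (by assumption)

/-- Jensen: for nonneg weights summing to 1, `(∑ w x)^2 ≤ ∑ w x^2`. -/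
lemma sq_sum_le_sum_sq {ι : Type} [Fintype ι] (w x : ι → ℝ) (hw : ∀ i, 0 ≤ w i)
    (hw1 : ∑ i, w i = 1) : (∑ i, w i * x i) ^ 2 ≤ ∑ i, w i * x i ^ 2 := by
  have h := Finset.sum_sq_le_sum_mul_sum_of_sq_eq_mul Finset.univ
    (r := fun i => w i * x i) (f := w) (g := fun i => w i * x i ^ 2)
    (fun i _ => hw i) (fun i _ => mul_nonneg (hw i) (sq_nonneg _))
    (fun i _ => by ring)
  rwa [hw1, one_mul] at h

end Helpers

section ExpLemmas

variable {S A : Type} [Fintype S] [Fintype A]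

lemma Exp_fcongr (p : S → A → S → ℝ) (μ : ℕ → S → A → ℝ) (n t : ℕ) (s : S)
    {f g : Traj S A n → ℝ} (h : ∀ τ, f τ = g τ) :
    Exp p μ n t s f = Exp p μ n t s g := by
  have : f = g := funext h
  rw [this]

lemma Gest_congr (π : ℕ → S → A → ℝ) (r : S → A → ℝ) (b : ℕ → S → A → ℝ)
    {μ μ' : ℕ → S → A → ℝ} :
    ∀ (n t : ℕ) (s : S), (∀ k, k ≤ n → μ (t + k) = μ' (t + k)) →
      ∀ τ, Gest π μ r b n t s τ = Gest π μ' r b n t s τ := by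
  intro n
  induction n with
  | zero =>
    intro t s h τ
    have h0 : μ t = μ' t := by simpa using h 0 (le_refl 0)
    simp [Gest, h0]
  | succ n ih =>
    intro t s h τ
    obtain ⟨a, s', τ'⟩ := τ
    have h0 : μ t = μ' t := by simpa using h 0 (by omega)
    have h' : ∀ k, k ≤ n → μ (t + 1 + k) = μ' (t + 1 + k) := by
      intro k hk
      have := h (k + 1) (by omega)
      rwa [show t + (k + 1) = t + 1 + k by omega] at this
    simp only [Gest, h0, ih (t + 1) s' h' τ']

lemma Exp_congr (p : S → A → S → ℝ) {μ μ' : ℕ → S → A → ℝ} :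
    ∀ (n t : ℕ) (s : S) (f : Traj S A n → ℝ), (∀ k, k ≤ n → μ (t + k) = μ' (t + k)) →
      Exp p μ n t s f = Exp p μ' n t s f := by
  intro n
  induction n with
  | zero =>
    intro t s f h
    have h0 : μ t = μ' t := by simpa using h 0 (le_refl 0)
    simp [Exp, h0]
  | succ n ih =>
    intro t s f h
    have h0 : μ t = μ' t := by simpa using h 0 (by omega)
    have h' : ∀ k, k ≤ n → μ (t + 1 + k) = μ' (t + 1 + k) := by
      intro k hk
      have := h (k + 1) (by omega)
      rwa [show t + (k + 1) = t + 1 + k by omega] at this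
    simp only [Exp, h0]
    refine Finset.sum_congr rfl fun a _ => ?_
    congr 1
    refine Finset.sum_congr rfl fun s' _ => ?_
    rw [ih (t + 1) s' _ h']

/-- One-level weighted-sum helper. -/
lemma sum_weighted_quad {ι : Type} [Fintype ι] (w : ι → ℝ) (hw1 : ∑ i, w i = 1)
    (x y : ι → ℝ) (B C D : ℝ) :
    ∑ i, w i * (B * x i + C * y i + D) = B * (∑ i, w i * x i) + C * (∑ i, w i * y i) + D := by
  have : ∀ i, w i * (B * x i + C * y i + D) = B * (w i * x i) + C * (w i * y i) + D * w i := by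
    intro i; ring
  rw [Finset.sum_congr rfl fun i _ => this i]
  rw [Finset.sum_add_distrib, Finset.sum_add_distrib, ← Finset.mul_sum, ← Finset.mul_sum,
    ← Finset.mul_sum, hw1, mul_one]

/-- `Exp` of a quadratic function of another function of the trajectory. -/
lemma Exp_quad (p : S → A → S → ℝ) (hp : IsKernel p) (μ : ℕ → S → A → ℝ) (hμ : IsPolicy μ) :
    ∀ (n t : ℕ) (s : S) (g : Traj S A n → ℝ) (B C D : ℝ),
      Exp p μ n t s (fun τ => B * (g τ) ^ 2 + C * g τ + D) =
        B * Exp p μ n t s (fun τ => (g τ) ^ 2) + C * Exp p μ n t s g + D := by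
  intro n
  induction n with
  | zero =>
    intro t s g B C D
    simp only [Exp]
    exact sum_weighted_quad _ (hμ t s).2 _ _ _ _ _
  | succ n ih =>
    intro t s g B C D
    simp only [Exp]
    have inner : ∀ (a : A) (s' : S),
        Exp p μ n (t + 1) s' (fun τ => B * (g (a, s', τ)) ^ 2 + C * g (a, s', τ) + D) =
          B * Exp p μ n (t + 1) s' (fun τ => (g (a, s', τ)) ^ 2) +
            C * Exp p μ n (t + 1) s' (fun τ => g (a, s', τ)) + D := fun a s' => ih (t + 1) s' _ B C D
    calc ∑ a, μ t s a * ∑ s', p s a s' *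
          Exp p μ n (t + 1) s' (fun τ => B * (g (a, s', τ)) ^ 2 + C * g (a, s', τ) + D)
        = ∑ a, μ t s a *
            (B * (∑ s', p s a s' * Exp p μ n (t + 1) s' (fun τ => (g (a, s', τ)) ^ 2)) +
             C * (∑ s', p s a s' * Exp p μ n (t + 1) s' (fun τ => g (a, s', τ))) + D) := by
          refine Finset.sum_congr rfl fun a _ => ?_
          congr 1
          rw [Finset.sum_congr rfl fun s' _ => by rw [inner a s']]
          exact sum_weighted_quad _ (hp s a).2 _ _ _ _ _
      _ = _ := sum_weighted_quad _ (hμ t s).2 _ _ _ _ _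

lemma Exp_affine (p : S → A → S → ℝ) (hp : IsKernel p) (μ : ℕ → S → A → ℝ) (hμ : IsPolicy μ)
    (n t : ℕ) (s : S) (g : Traj S A n → ℝ) (C D : ℝ) :
    Exp p μ n t s (fun τ => C * g τ + D) = C * Exp p μ n t s g + D := by
  have h := Exp_quad p hp μ hμ n t s g 0 C D
  simpa using h

end ExpLemmas

section NormPolTerms

variable {S A : Type} [Fintype S] [Fintype A] [Nonempty A]

/-- Per-term identity: `μ*(a) · (ρ(a) · D(a)) = π(a) · D(a)`. -/
lemma term_rho (π' u D : A → ℝ) (a : A)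
    (hD : π' a * Real.sqrt (u a) = 0 → π' a * D a = 0) :
    normPol (fun x => π' x * Real.sqrt (u x)) a *
      (π' a / normPol (fun x => π' x * Real.sqrt (u x)) a * D a) = π' a * D a := by
  set m := normPol (fun x => π' x * Real.sqrt (u x)) a with hm
  by_cases h : m = 0
  · rw [h]
    simp only [zero_mul]
    exact (hD (normPol_eq_zero a h)).symm
  · field_simp

/-- Per-term identity: `μ*(a) · (ρ(a)² · u(a)) = w(a) · W`. -/
lemma term_rho_sq (π' u : A → ℝ) (hπ' : ∀ x, 0 ≤ π' x) (hu : ∀ x, 0 ≤ u x) (a : A) :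
    normPol (fun x => π' x * Real.sqrt (u x)) a *
      ((π' a / normPol (fun x => π' x * Real.sqrt (u x)) a) ^ 2 * u a) =
    (π' a * Real.sqrt (u a)) * ∑ x, π' x * Real.sqrt (u x) := by
  set w := fun x => π' x * Real.sqrt (u x) with hw
  set W := ∑ x, w x with hW
  set m := normPol w a with hm
  have hsq : Real.sqrt (u a) * Real.sqrt (u a) = u a := Real.mul_self_sqrt (hu a)
  have wzero_case : w a = 0 → m * ((π' a / m) ^ 2 * u a) = w a * W := by
    -- when w a = 0, both sides are 0 (LHS since π'² u = 0)
    intro hwa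
    have h2 : π' a ^ 2 * u a = 0 := by
      have hwa' : π' a * Real.sqrt (u a) = 0 := hwa
      have : (π' a * Real.sqrt (u a)) ^ 2 = π' a ^ 2 * u a := by
        rw [mul_pow, Real.sq_sqrt (hu a)]
      rw [← this, hwa']; ring
    have hL : m * ((π' a / m) ^ 2 * u a) = (π' a ^ 2 * u a) * m / m ^ 2 := by
      rw [div_pow]; ring
    rw [hL, h2, hwa]
    simp
  by_cases hwa : w a = 0
  · exact wzero_case hwa
  · have hWpos : W ≠ 0 := by
      intro h0
      have hnn : ∀ x ∈ Finset.univ, 0 ≤ w x := fun x _ =>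
        mul_nonneg (hπ' x) (Real.sqrt_nonneg _)
      exact hwa ((Finset.sum_eq_zero_iff_of_nonneg hnn).1 (hW ▸ h0) a (Finset.mem_univ a))
    have hμa : m = w a / W := by rw [hm, hW, hw]; unfold normPol; rw [if_neg]; rw [← hW]; exact hWpos
    have hπa : π' a ≠ 0 := fun h0 => hwa (by rw [hw]; simp [h0])
    have hsa : Real.sqrt (u a) ≠ 0 := fun h0 => hwa (by rw [hw]; simp [h0])
    rw [hμa]
    show w a / W * ((π' a / (w a / W)) ^ 2 * u a) = w a * W
    rw [hw]
    simp only
    set z := Real.sqrt (u a) with hz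
    rw [← hsq]
    field_simp
end NormPolTerms

set_option linter.unusedSectionVars false

section Structural

variable {S A : Type} [Fintype S] [Fintype A] [Nonempty A]
variable (T : ℕ) (p : S → A → S → ℝ) (π : ℕ → S → A → ℝ) (r : S → A → ℝ) (c : ℕ → S → A → ℝ)

lemma mustar_isPolicy (hπ : IsPolicy π) : IsPolicy (mustar T p π r c) := by
  intro t s
  constructor
  · intro a
    exact normPol_nonneg (fun a' => mul_nonneg ((hπ t s).1 a') (Real.sqrt_nonneg _)) a
  · exact normPol_sum_one _

lemma qf_succ (n t : ℕ) (h : t + n + 2 = T) (s : S) (a : A) :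
    qf T p π r t s a = r s a + ∑ s', p s a s' * vf T p π r (t + 1) s' := by
  unfold qf
  rw [show T - 1 - t = n + 1 by omega]
  show r s a + _ = _
  congr 1
  refine Finset.sum_congr rfl fun s' _ => ?_
  congr 1
  unfold vf qf
  rw [show T - 1 - (t + 1) = n by omega]

lemma nuf_eq (t : ℕ) (h : t + 2 ≤ T) (s : S) (a : A) :
    nuf T p π r t s a = (∑ s', p s a s' * (vf T p π r (t + 1) s') ^ 2) -
      (∑ s', p s a s' * vf T p π r (t + 1) s') ^ 2 := by
  unfold nuf
  rw [if_pos h]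

lemma uf_zero (t : ℕ) (h : t + 1 = T) (s : S) (a : A) :
    uf T p π r c t s a = (qf T p π r t s a - c t s a) ^ 2 := by
  unfold uf
  rw [show T - 1 - t = 0 by omega, uAux]

/-- the policy appearing inside `uAux (n+1) t` agrees with `mustar` at times `t+1, …, t+1+n`
when `t + n + 2 = T`. -/
lemma inner_policy_eq (n t : ℕ) (h : t + n + 2 = T) (k : ℕ) (hk : k ≤ n) :
    (fun (s₁ : S) (a₁ : A) => normPol (fun a₂ =>
        π (t + 1 + k) s₁ a₂ * Real.sqrt (uAux T p π r c (n - ((t + 1 + k) - (t + 1))) (t + 1 + k) s₁ a₂)) a₁)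
      = mustar T p π r c (t + 1 + k) := by
  funext s₁ a₁
  unfold mustar uf
  rw [show n - ((t + 1 + k) - (t + 1)) = T - 1 - (t + 1 + k) by omega]

lemma uf_succ (n t : ℕ) (h : t + n + 2 = T) (s : S) (a : A) :
    uf T p π r c t s a = (qf T p π r t s a - c t s a) ^ 2 + nuf T p π r t s a +
      ∑ s', p s a s' *
        Var p (mustar T p π r c) n (t + 1) s'
          (Gest π (mustar T p π r c) r c n (t + 1) s') := by
  unfold uf
  rw [show T - 1 - t = n + 1 by omega, uAux]
  congr 1
  refine Finset.sum_congr rfl fun s' _ => ?_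
  congr 1
  set ν : ℕ → S → A → ℝ := fun t' s₁ a₁ => normPol (fun a₂ =>
      π t' s₁ a₂ * Real.sqrt (uAux T p π r c (n - (t' - (t + 1))) t' s₁ a₂)) a₁ with hν
  have hag : ∀ k, k ≤ n → ν (t + 1 + k) = mustar T p π r c (t + 1 + k) := by
    intro k hk
    rw [hν]
    exact inner_policy_eq T p π r c n t h k hk
  have e1 : Exp p ν n (t + 1) s' (Gest π ν r c n (t + 1) s') =
      Exp p (mustar T p π r c) n (t + 1) s' (Gest π (mustar T p π r c) r c n (t + 1) s') := by
    rw [Exp_fcongr p ν n (t + 1) s' (g := Gest π (mustar T p π r c) r c n (t + 1) s')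
      (fun τ => Gest_congr π r c n (t + 1) s' hag τ)]
    exact Exp_congr p n (t + 1) s' _ hag
  have e2 : Exp p ν n (t + 1) s' (fun τ => (Gest π ν r c n (t + 1) s' τ) ^ 2) =
      Exp p (mustar T p π r c) n (t + 1) s'
        (fun τ => (Gest π (mustar T p π r c) r c n (t + 1) s' τ) ^ 2) := by
    rw [Exp_fcongr p ν n (t + 1) s'
      (g := fun τ => (Gest π (mustar T p π r c) r c n (t + 1) s' τ) ^ 2)
      (fun τ => by rw [Gest_congr π r c n (t + 1) s' hag τ])]
    exact Exp_congr p n (t + 1) s' _ hag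
  show Var p ν n (t + 1) s' (Gest π ν r c n (t + 1) s') = _
  unfold Var
  rw [e1, e2]

end Structural

section Key

variable {S A : Type} [Fintype S] [Fintype A] [Nonempty A]
variable (T : ℕ) (p : S → A → S → ℝ) (π : ℕ → S → A → ℝ) (r : S → A → ℝ) (c : ℕ → S → A → ℝ)

/-- helper: `∑ μ (X + β) = ∑ μ X + β` when `∑ μ = 1`. -/
lemma sum_split {ι : Type} [Fintype ι] (μf Xf : ι → ℝ) (β : ℝ) (h1 : ∑ i, μf i = 1) :
    ∑ i, μf i * (Xf i + β) = (∑ i, μf i * Xf i) + β := by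
  have : ∀ i, μf i * (Xf i + β) = μf i * Xf i + β * μf i := fun i => by ring
  rw [Finset.sum_congr rfl fun i _ => this i, Finset.sum_add_distrib, ← Finset.mul_sum, h1,
    mul_one]

lemma sumA (π' u D : A → ℝ)
    (hD : ∀ a, π' a * Real.sqrt (u a) = 0 → π' a * D a = 0) (β : ℝ) :
    ∑ a, normPol (fun x => π' x * Real.sqrt (u x)) a *
        (π' a / normPol (fun x => π' x * Real.sqrt (u x)) a * D a + β) =
      (∑ a, π' a * D a) + β := by
  rw [sum_split _ _ β (normPol_sum_one _)]
  congr 1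
  exact Finset.sum_congr rfl fun a _ => term_rho π' u D a (hD a)

lemma sumB (π' u D : A → ℝ) (hπ' : ∀ x, 0 ≤ π' x) (hu : ∀ x, 0 ≤ u x)
    (hD : ∀ a, π' a * Real.sqrt (u a) = 0 → π' a * D a = 0) (β : ℝ) :
    ∑ a, normPol (fun x => π' x * Real.sqrt (u x)) a *
        ((π' a / normPol (fun x => π' x * Real.sqrt (u x)) a) ^ 2 * u a +
          2 * β * (π' a / normPol (fun x => π' x * Real.sqrt (u x)) a * D a) + β ^ 2) =
      (∑ x, π' x * Real.sqrt (u x)) ^ 2 + 2 * β * (∑ a, π' a * D a) + β ^ 2 := by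
  have hterm : ∀ a, normPol (fun x => π' x * Real.sqrt (u x)) a *
        ((π' a / normPol (fun x => π' x * Real.sqrt (u x)) a) ^ 2 * u a +
          2 * β * (π' a / normPol (fun x => π' x * Real.sqrt (u x)) a * D a) + β ^ 2) =
      (π' a * Real.sqrt (u a)) * (∑ x, π' x * Real.sqrt (u x)) +
        2 * β * (π' a * D a) + β ^ 2 * normPol (fun x => π' x * Real.sqrt (u x)) a := by
    intro a
    rw [← term_rho_sq π' u hπ' hu a, ← term_rho π' u D a (hD a)]
    ring
  rw [Finset.sum_congr rfl fun a _ => hterm a]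
  rw [Finset.sum_add_distrib, Finset.sum_add_distrib, ← Finset.sum_mul, ← Finset.mul_sum,
    ← Finset.mul_sum, normPol_sum_one, mul_one]
  ring

lemma vf_sub_bbar (t : ℕ) (s : S) :
    vf T p π r t s - bbar π c t s = ∑ a, π t s a * (qf T p π r t s a - c t s a) := by
  unfold vf bbar
  rw [← Finset.sum_sub_distrib]
  exact Finset.sum_congr rfl fun a _ => by ring

theorem key (hp : IsKernel p) (hπ : IsPolicy π) :
    ∀ (n t : ℕ) (s : S), t + n + 1 = T →
      (∀ a, (qf T p π r t s a - c t s a) ^ 2 ≤ uf T p π r c t s a) ∧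
      Exp p (mustar T p π r c) n t s (Gest π (mustar T p π r c) r c n t s) = vf T p π r t s ∧
      Exp p (mustar T p π r c) n t s
          (fun τ => (Gest π (mustar T p π r c) r c n t s τ) ^ 2) =
        (∑ a, π t s a * Real.sqrt (uf T p π r c t s a)) ^ 2 +
          2 * bbar π c t s * vf T p π r t s - (bbar π c t s) ^ 2 := by
  have hμ : IsPolicy (mustar T p π r c) := mustar_isPolicy T p π r c hπ
  intro n
  induction n with
  | zero =>
    intro t s h
    have hq : ∀ a, qf T p π r t s a = r s a := by
      intro a; unfold qf; rw [show T - 1 - t = 0 by omega]; rfl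
    have huf : ∀ a, uf T p π r c t s a = (r s a - c t s a) ^ 2 := by
      intro a; rw [uf_zero T p π r c t (by omega), hq]
    have hC : ∀ a, (qf T p π r t s a - c t s a) ^ 2 ≤ uf T p π r c t s a := by
      intro a; rw [huf, hq]
    have hD : ∀ a, π t s a * Real.sqrt (uf T p π r c t s a) = 0 →
        π t s a * (r s a - c t s a) = 0 := by
      intro a h0
      rcases mul_eq_zero.1 h0 with h1 | h1
      · rw [h1, zero_mul]
      · rw [huf, Real.sqrt_sq_eq_abs] at h1
        rw [abs_eq_zero.1 h1, mul_zero]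
    have hsub : ∑ a, π t s a * (r s a - c t s a) = vf T p π r t s - bbar π c t s := by
      rw [vf_sub_bbar]
      exact Finset.sum_congr rfl fun a _ => by rw [hq]
    refine ⟨hC, ?_, ?_⟩
    · -- (A) base
      show ∑ a, mustar T p π r c t s a *
          (π t s a / mustar T p π r c t s a * (r s a - c t s a) + bbar π c t s) = _
      have := sumA (π t s) (fun x => uf T p π r c t s x) (fun x => r s x - c t s x) hD
        (bbar π c t s)
      rw [show (∑ a, mustar T p π r c t s a *
          (π t s a / mustar T p π r c t s a * (r s a - c t s a) + bbar π c t s)) =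
          (∑ a, π t s a * (r s a - c t s a)) + bbar π c t s from this, hsub]
      ring
    · -- (B) base
      show ∑ a, mustar T p π r c t s a *
          (π t s a / mustar T p π r c t s a * (r s a - c t s a) + bbar π c t s) ^ 2 = _
      have hterm : ∀ a, mustar T p π r c t s a *
          (π t s a / mustar T p π r c t s a * (r s a - c t s a) + bbar π c t s) ^ 2 =
          mustar T p π r c t s a *
            ((π t s a / mustar T p π r c t s a) ^ 2 * uf T p π r c t s a +
              2 * bbar π c t s * (π t s a / mustar T p π r c t s a * (r s a - c t s a)) +
              (bbar π c t s) ^ 2) := by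
        intro a
        rw [huf a]
        ring
      rw [Finset.sum_congr rfl fun a _ => hterm a]
      have := sumB (π t s) (fun x => uf T p π r c t s x) (fun x => r s x - c t s x)
        (fun x => (hπ t s).1 x)
        (fun x => le_trans (sq_nonneg _) (by rw [← huf x])) hD (bbar π c t s)
      rw [show (∑ a, mustar T p π r c t s a *
          ((π t s a / mustar T p π r c t s a) ^ 2 * uf T p π r c t s a +
            2 * bbar π c t s * (π t s a / mustar T p π r c t s a * (r s a - c t s a)) +
            (bbar π c t s) ^ 2)) =
          (∑ x, π t s x * Real.sqrt (uf T p π r c t s x)) ^ 2 +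
            2 * bbar π c t s * (∑ a, π t s a * (r s a - c t s a)) + (bbar π c t s) ^ 2
          from this, hsub]
      ring
  | succ n ih =>
    intro t s h
    have h' : t + 1 + n + 1 = T := by omega
    -- abbreviations for next-step quantities
    have hA : ∀ s', Exp p (mustar T p π r c) n (t+1) s'
        (Gest π (mustar T p π r c) r c n (t+1) s') = vf T p π r (t+1) s' :=
      fun s' => (ih (t+1) s' h').2.1
    have hB : ∀ s', Exp p (mustar T p π r c) n (t+1) s'
        (fun τ => (Gest π (mustar T p π r c) r c n (t+1) s' τ) ^ 2) =
        (∑ a, π (t+1) s' a * Real.sqrt (uf T p π r c (t+1) s' a)) ^ 2 +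
          2 * bbar π c (t+1) s' * vf T p π r (t+1) s' - (bbar π c (t+1) s') ^ 2 :=
      fun s' => (ih (t+1) s' h').2.2
    have hC' : ∀ s' a, (qf T p π r (t+1) s' a - c (t+1) s' a) ^ 2 ≤
        uf T p π r c (t+1) s' a := fun s' => (ih (t+1) s' h').1
    have hVar : ∀ s', Var p (mustar T p π r c) n (t+1) s'
        (Gest π (mustar T p π r c) r c n (t+1) s') =
        (∑ a, π (t+1) s' a * Real.sqrt (uf T p π r c (t+1) s' a)) ^ 2 +
          2 * bbar π c (t+1) s' * vf T p π r (t+1) s' - (bbar π c (t+1) s') ^ 2 -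
          (vf T p π r (t+1) s') ^ 2 := by
      intro s'
      unfold Var
      rw [hB s', hA s']
    have hVarpos : ∀ s', 0 ≤ Var p (mustar T p π r c) n (t+1) s'
        (Gest π (mustar T p π r c) r c n (t+1) s') := by
      intro s'
      rw [hVar s']
      have h1 : |vf T p π r (t+1) s' - bbar π c (t+1) s'| ≤
          ∑ a, π (t+1) s' a * Real.sqrt (uf T p π r c (t+1) s' a) := by
        rw [vf_sub_bbar]
        refine le_trans (Finset.abs_sum_le_sum_abs _ _) (Finset.sum_le_sum fun a _ => ?_)
        rw [abs_mul, abs_of_nonneg ((hπ (t+1) s').1 a), ← Real.sqrt_sq_eq_abs]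
        exact mul_le_mul_of_nonneg_left (Real.sqrt_le_sqrt (hC' s' a)) ((hπ (t+1) s').1 a)
      have h2 : (vf T p π r (t+1) s' - bbar π c (t+1) s') ^ 2 ≤
          (∑ a, π (t+1) s' a * Real.sqrt (uf T p π r c (t+1) s' a)) ^ 2 := by
        rw [← sq_abs]
        exact pow_le_pow_left₀ (abs_nonneg _) h1 2
      nlinarith [h2]
    have hnuf : ∀ a, 0 ≤ nuf T p π r t s a := by
      intro a
      rw [nuf_eq T p π r t (by omega) s a]
      have := sq_sum_le_sum_sq (p s a) (fun s' => vf T p π r (t+1) s') (hp s a).1 (hp s a).2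
      linarith [this]
    have hufe : ∀ a, uf T p π r c t s a = (qf T p π r t s a - c t s a) ^ 2 +
        nuf T p π r t s a + ∑ s', p s a s' *
          ((∑ a', π (t+1) s' a' * Real.sqrt (uf T p π r c (t+1) s' a')) ^ 2 +
            2 * bbar π c (t+1) s' * vf T p π r (t+1) s' - (bbar π c (t+1) s') ^ 2 -
            (vf T p π r (t+1) s') ^ 2) := by
      intro a
      rw [uf_succ T p π r c n t (by omega) s a]
      congr 1
      exact Finset.sum_congr rfl fun s' _ => by rw [hVar s']
    have hC : ∀ a, (qf T p π r t s a - c t s a) ^ 2 ≤ uf T p π r c t s a := by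
      intro a
      rw [hufe a]
      have hpos : 0 ≤ ∑ s', p s a s' *
          ((∑ a', π (t+1) s' a' * Real.sqrt (uf T p π r c (t+1) s' a')) ^ 2 +
            2 * bbar π c (t+1) s' * vf T p π r (t+1) s' - (bbar π c (t+1) s') ^ 2 -
            (vf T p π r (t+1) s') ^ 2) := by
        refine Finset.sum_nonneg fun s' _ => mul_nonneg ((hp s a).1 s') ?_
        have := hVarpos s'
        rwa [hVar s'] at this
      linarith [hnuf a, hpos]
    have hu0 : ∀ a, 0 ≤ uf T p π r c t s a := fun a => le_trans (sq_nonneg _) (hC a)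
    have hD : ∀ a, π t s a * Real.sqrt (uf T p π r c t s a) = 0 →
        π t s a * (qf T p π r t s a - c t s a) = 0 := by
      intro a h0
      rcases mul_eq_zero.1 h0 with h1 | h1
      · rw [h1, zero_mul]
      · have hle : uf T p π r c t s a ≤ 0 := Real.sqrt_eq_zero'.1 h1
        have h2 : (qf T p π r t s a - c t s a) ^ 2 = 0 :=
          le_antisymm (le_trans (hC a) hle) (sq_nonneg _)
        rw [pow_eq_zero_iff (by norm_num : 2 ≠ 0) |>.1 h2, mul_zero]
    have hq : ∀ a, qf T p π r t s a = r s a + ∑ s', p s a s' * vf T p π r (t+1) s' :=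
      fun a => qf_succ T p π r n t (by omega) s a
    have hinner : ∀ a s', Exp p (mustar T p π r c) n (t+1) s'
        (fun τ => π t s a / mustar T p π r c t s a *
          (r s a + Gest π (mustar T p π r c) r c n (t+1) s' τ - c t s a) + bbar π c t s) =
        (π t s a / mustar T p π r c t s a) * vf T p π r (t+1) s' +
          (π t s a / mustar T p π r c t s a * (r s a - c t s a) + bbar π c t s) := by
      intro a s'
      rw [Exp_fcongr p (mustar T p π r c) n (t+1) s'
        (g := fun τ => (π t s a / mustar T p π r c t s a) *
          (Gest π (mustar T p π r c) r c n (t+1) s' τ) +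
          (π t s a / mustar T p π r c t s a * (r s a - c t s a) + bbar π c t s))
        (fun τ => by ring)]
      rw [Exp_affine p hp (mustar T p π r c) hμ n (t+1) s' _ _ _, hA s']
    have houter : ∀ a, ∑ s', p s a s' *
        ((π t s a / mustar T p π r c t s a) * vf T p π r (t+1) s' +
          (π t s a / mustar T p π r c t s a * (r s a - c t s a) + bbar π c t s)) =
        π t s a / mustar T p π r c t s a * (qf T p π r t s a - c t s a) + bbar π c t s := by
      intro a
      rw [sum_split (p s a)
        (fun s' => (π t s a / mustar T p π r c t s a) * vf T p π r (t+1) s') _ (hp s a).2]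
      have e1 : ∑ s', p s a s' * ((π t s a / mustar T p π r c t s a) * vf T p π r (t+1) s') =
          (π t s a / mustar T p π r c t s a) * ∑ s', p s a s' * vf T p π r (t+1) s' := by
        rw [Finset.mul_sum]
        exact Finset.sum_congr rfl fun s' _ => by ring
      rw [e1, hq a]
      ring
    refine ⟨hC, ?_, ?_⟩
    · -- (A) step
      show ∑ a, mustar T p π r c t s a * ∑ s', p s a s' *
          Exp p (mustar T p π r c) n (t+1) s'
            (fun τ => π t s a / mustar T p π r c t s a *
              (r s a + Gest π (mustar T p π r c) r c n (t+1) s' τ - c t s a) +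
              bbar π c t s) = _
      have e2 : ∀ a, (∑ s', p s a s' * Exp p (mustar T p π r c) n (t+1) s'
            (fun τ => π t s a / mustar T p π r c t s a *
              (r s a + Gest π (mustar T p π r c) r c n (t+1) s' τ - c t s a) +
              bbar π c t s)) =
          π t s a / mustar T p π r c t s a * (qf T p π r t s a - c t s a) + bbar π c t s := by
        intro a
        rw [Finset.sum_congr rfl fun s' _ => by rw [hinner a s']]
        exact houter a
      rw [Finset.sum_congr rfl fun a _ => by rw [e2 a]]
      rw [show (∑ a, mustar T p π r c t s a *
          (π t s a / mustar T p π r c t s a * (qf T p π r t s a - c t s a) + bbar π c t s)) =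
          (∑ a, π t s a * (qf T p π r t s a - c t s a)) + bbar π c t s from
        sumA (π t s) (fun x => uf T p π r c t s x)
          (fun x => qf T p π r t s x - c t s x) hD (bbar π c t s)]
      rw [← vf_sub_bbar]
      ring
    · -- (B) step
      show ∑ a, mustar T p π r c t s a * ∑ s', p s a s' *
          Exp p (mustar T p π r c) n (t+1) s'
            (fun τ => (π t s a / mustar T p π r c t s a *
              (r s a + Gest π (mustar T p π r c) r c n (t+1) s' τ - c t s a) +
              bbar π c t s) ^ 2) = _
      have hinnerB : ∀ a s', Exp p (mustar T p π r c) n (t+1) s'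
          (fun τ => (π t s a / mustar T p π r c t s a *
            (r s a + Gest π (mustar T p π r c) r c n (t+1) s' τ - c t s a) +
            bbar π c t s) ^ 2) =
          (π t s a / mustar T p π r c t s a) ^ 2 *
            ((∑ a', π (t+1) s' a' * Real.sqrt (uf T p π r c (t+1) s' a')) ^ 2 +
              2 * bbar π c (t+1) s' * vf T p π r (t+1) s' - (bbar π c (t+1) s') ^ 2) +
          (2 * (π t s a / mustar T p π r c t s a) *
            (π t s a / mustar T p π r c t s a * (r s a - c t s a) + bbar π c t s)) *
            vf T p π r (t+1) s' +
          (π t s a / mustar T p π r c t s a * (r s a - c t s a) + bbar π c t s) ^ 2 := by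
        intro a s'
        rw [Exp_fcongr p (mustar T p π r c) n (t+1) s'
          (g := fun τ => (π t s a / mustar T p π r c t s a) ^ 2 *
              (Gest π (mustar T p π r c) r c n (t+1) s' τ) ^ 2 +
            (2 * (π t s a / mustar T p π r c t s a) *
              (π t s a / mustar T p π r c t s a * (r s a - c t s a) + bbar π c t s)) *
              Gest π (mustar T p π r c) r c n (t+1) s' τ +
            (π t s a / mustar T p π r c t s a * (r s a - c t s a) + bbar π c t s) ^ 2)
          (fun τ => by ring)]
        rw [Exp_quad p hp (mustar T p π r c) hμ n (t+1) s' _ _ _ _, hB s', hA s']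
      have houterB : ∀ a, ∑ s', p s a s' *
          ((π t s a / mustar T p π r c t s a) ^ 2 *
            ((∑ a', π (t+1) s' a' * Real.sqrt (uf T p π r c (t+1) s' a')) ^ 2 +
              2 * bbar π c (t+1) s' * vf T p π r (t+1) s' - (bbar π c (t+1) s') ^ 2) +
          (2 * (π t s a / mustar T p π r c t s a) *
            (π t s a / mustar T p π r c t s a * (r s a - c t s a) + bbar π c t s)) *
            vf T p π r (t+1) s' +
          (π t s a / mustar T p π r c t s a * (r s a - c t s a) + bbar π c t s) ^ 2) =
          (π t s a / mustar T p π r c t s a) ^ 2 * uf T p π r c t s a +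
            2 * bbar π c t s *
              (π t s a / mustar T p π r c t s a * (qf T p π r t s a - c t s a)) +
            (bbar π c t s) ^ 2 := by
        intro a
        rw [sum_weighted_quad (p s a) (hp s a).2
          (fun s' => (∑ a', π (t+1) s' a' * Real.sqrt (uf T p π r c (t+1) s' a')) ^ 2 +
            2 * bbar π c (t+1) s' * vf T p π r (t+1) s' - (bbar π c (t+1) s') ^ 2)
          (fun s' => vf T p π r (t+1) s') _ _ _]
        have hsplit2 : ∑ s', p s a s' *
            ((∑ a', π (t+1) s' a' * Real.sqrt (uf T p π r c (t+1) s' a')) ^ 2 +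
              2 * bbar π c (t+1) s' * vf T p π r (t+1) s' - (bbar π c (t+1) s') ^ 2 -
              (vf T p π r (t+1) s') ^ 2) =
            (∑ s', p s a s' *
              ((∑ a', π (t+1) s' a' * Real.sqrt (uf T p π r c (t+1) s' a')) ^ 2 +
                2 * bbar π c (t+1) s' * vf T p π r (t+1) s' - (bbar π c (t+1) s') ^ 2)) -
            ∑ s', p s a s' * (vf T p π r (t+1) s') ^ 2 := by
          rw [← Finset.sum_sub_distrib]
          exact Finset.sum_congr rfl fun s' _ => by ring
        have hnufe : nuf T p π r t s a = (∑ s', p s a s' * (vf T p π r (t+1) s') ^ 2) -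
            (∑ s', p s a s' * vf T p π r (t+1) s') ^ 2 := nuf_eq T p π r t (by omega) s a
        rw [hufe a, hsplit2, hnufe, hq a]
        ring
      have e2 : ∀ a, (∑ s', p s a s' * Exp p (mustar T p π r c) n (t+1) s'
            (fun τ => (π t s a / mustar T p π r c t s a *
              (r s a + Gest π (mustar T p π r c) r c n (t+1) s' τ - c t s a) +
              bbar π c t s) ^ 2)) =
          (π t s a / mustar T p π r c t s a) ^ 2 * uf T p π r c t s a +
            2 * bbar π c t s *
              (π t s a / mustar T p π r c t s a * (qf T p π r t s a - c t s a)) +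
            (bbar π c t s) ^ 2 := by
        intro a
        rw [Finset.sum_congr rfl fun s' _ => by rw [hinnerB a s']]
        exact houterB a
      rw [Finset.sum_congr rfl fun a _ => by rw [e2 a]]
      rw [show (∑ a, mustar T p π r c t s a *
          ((π t s a / mustar T p π r c t s a) ^ 2 * uf T p π r c t s a +
            2 * bbar π c t s *
              (π t s a / mustar T p π r c t s a * (qf T p π r t s a - c t s a)) +
            (bbar π c t s) ^ 2)) =
          (∑ x, π t s x * Real.sqrt (uf T p π r c t s x)) ^ 2 +
            2 * bbar π c t s * (∑ a, π t s a * (qf T p π r t s a - c t s a)) +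
            (bbar π c t s) ^ 2 from
        sumB (π t s) (fun x => uf T p π r c t s x)
          (fun x => qf T p π r t s x - c t s x) (fun x => (hπ t s).1 x) hu0 hD
          (bbar π c t s)]
      rw [← vf_sub_bbar]
      ring

end Key

section Final

/-- Two-dimensional Minkowski inequality for finite sums. -/
lemma mink {ι : Type} [Fintype ι] (x y : ι → ℝ) :
    Real.sqrt ((∑ i, x i) ^ 2 + (∑ i, y i) ^ 2) ≤ ∑ i, Real.sqrt (x i ^ 2 + y i ^ 2) := by
  classical
  let F : ι → EuclideanSpace ℝ (Fin 2) := fun i => WithLp.toLp 2 ![x i, y i]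
  have h : ‖∑ i, F i‖ ≤ ∑ i, ‖F i‖ := norm_sum_le Finset.univ F
  have hL : ‖∑ i, F i‖ = Real.sqrt ((∑ i, x i) ^ 2 + (∑ i, y i) ^ 2) := by
    rw [EuclideanSpace.norm_eq]
    congr 1
    rw [Fin.sum_univ_two]
    have h0 : (∑ i, F i) 0 = ∑ i, x i := by
      rw [WithLp.ofLp_sum, Finset.sum_apply]
      exact Finset.sum_congr rfl fun i _ => rfl
    have h1 : (∑ i, F i) 1 = ∑ i, y i := by
      rw [WithLp.ofLp_sum, Finset.sum_apply]
      exact Finset.sum_congr rfl fun i _ => rfl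
    rw [h0, h1, Real.norm_eq_abs, Real.norm_eq_abs, sq_abs, sq_abs]
  have hR : ∀ i : ι, ‖F i‖ = Real.sqrt (x i ^ 2 + y i ^ 2) := by
    intro i
    rw [EuclideanSpace.norm_eq, Fin.sum_univ_two]
    show Real.sqrt (‖x i‖ ^ 2 + ‖y i‖ ^ 2) = _
    rw [Real.norm_eq_abs, Real.norm_eq_abs, sq_abs, sq_abs]
  calc Real.sqrt ((∑ i, x i) ^ 2 + (∑ i, y i) ^ 2)
      = ‖∑ i, F i‖ := hL.symm
    _ ≤ ∑ i, ‖F i‖ := h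
    _ = ∑ i, Real.sqrt (x i ^ 2 + y i ^ 2) := Finset.sum_congr rfl fun i _ => hR i

variable {S A : Type} [Fintype S] [Fintype A] [Nonempty A]
variable (T : ℕ) (p : S → A → S → ℝ) (π : ℕ → S → A → ℝ) (r : S → A → ℝ)

theorem u_diff (hp : IsKernel p) (hπ : IsPolicy π) (b : ℕ → S → A → ℝ) :
    ∀ (n t : ℕ) (s : S) (a : A), t + n + 1 = T →
      uf T p π r (bstar T p π r) t s a + (qf T p π r t s a - b t s a) ^ 2 ≤
        uf T p π r b t s a := by
  intro n
  induction n with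
  | zero =>
    intro t s a h
    rw [uf_zero T p π r (bstar T p π r) t (by omega), uf_zero T p π r b t (by omega)]
    have : qf T p π r t s a - bstar T p π r t s a = 0 := sub_self _
    rw [this]
    simp
  | succ n ih =>
    intro t s a h
    have h' : t + 1 + n + 1 = T := by omega
    rw [uf_succ T p π r (bstar T p π r) n t (by omega) s a,
      uf_succ T p π r b n t (by omega) s a]
    have hz : qf T p π r t s a - bstar T p π r t s a = 0 := sub_self _
    rw [hz]
    have hsum : (∑ s', p s a s' * Var p (mustar T p π r (bstar T p π r)) n (t+1) s'
          (Gest π (mustar T p π r (bstar T p π r)) r (bstar T p π r) n (t+1) s')) ≤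
        ∑ s', p s a s' * Var p (mustar T p π r b) n (t+1) s'
          (Gest π (mustar T p π r b) r b n (t+1) s') := by
      refine Finset.sum_le_sum fun s' _ => mul_le_mul_of_nonneg_left ?_ ((hp s a).1 s')
      -- pointwise variance comparison
      have kb := key T p π r b hp hπ n (t+1) s' h'
      have ks := key T p π r (bstar T p π r) hp hπ n (t+1) s' h'
      have hVb : Var p (mustar T p π r b) n (t+1) s'
          (Gest π (mustar T p π r b) r b n (t+1) s') =
          (∑ a', π (t+1) s' a' * Real.sqrt (uf T p π r b (t+1) s' a')) ^ 2 +
            2 * bbar π b (t+1) s' * vf T p π r (t+1) s' - (bbar π b (t+1) s') ^ 2 -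
            (vf T p π r (t+1) s') ^ 2 := by
        unfold Var
        rw [kb.2.2, kb.2.1]
      have hbb : bbar π (bstar T p π r) (t+1) s' = vf T p π r (t+1) s' := rfl
      have hVs : Var p (mustar T p π r (bstar T p π r)) n (t+1) s'
          (Gest π (mustar T p π r (bstar T p π r)) r (bstar T p π r) n (t+1) s') =
          (∑ a', π (t+1) s' a' * Real.sqrt (uf T p π r (bstar T p π r) (t+1) s' a')) ^ 2 := by
        unfold Var
        rw [ks.2.2, ks.2.1, hbb]
        ring
      rw [hVb, hVs]
      -- now the Minkowski argument
      have hus0 : ∀ a', 0 ≤ uf T p π r (bstar T p π r) (t+1) s' a' := by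
        intro a'
        have := ks.1 a'
        have hz' : qf T p π r (t+1) s' a' - bstar T p π r (t+1) s' a' = 0 := sub_self _
        rw [hz'] at this
        simpa using this
      set X : A → ℝ := fun a' => π (t+1) s' a' *
        Real.sqrt (uf T p π r (bstar T p π r) (t+1) s' a') with hX
      set Y : A → ℝ := fun a' => π (t+1) s' a' *
        |qf T p π r (t+1) s' a' - b (t+1) s' a'| with hY
      have hstep1 : ∀ a', Real.sqrt (X a' ^ 2 + Y a' ^ 2) ≤
          π (t+1) s' a' * Real.sqrt (uf T p π r b (t+1) s' a') := by
        intro a'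
        have hπa : 0 ≤ π (t+1) s' a' := (hπ (t+1) s').1 a'
        have e1 : X a' ^ 2 + Y a' ^ 2 = π (t+1) s' a' ^ 2 *
            (uf T p π r (bstar T p π r) (t+1) s' a' +
              (qf T p π r (t+1) s' a' - b (t+1) s' a') ^ 2) := by
          rw [hX, hY]
          simp only
          rw [mul_pow, mul_pow, Real.sq_sqrt (hus0 a'), sq_abs]
          ring
        rw [e1, Real.sqrt_mul (sq_nonneg _), Real.sqrt_sq hπa]
        exact mul_le_mul_of_nonneg_left (Real.sqrt_le_sqrt (ih (t+1) s' a' h')) hπa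
      have hmink : Real.sqrt ((∑ a', X a') ^ 2 + (∑ a', Y a') ^ 2) ≤
          ∑ a', π (t+1) s' a' * Real.sqrt (uf T p π r b (t+1) s' a') :=
        le_trans (mink X Y) (Finset.sum_le_sum fun a' _ => hstep1 a')
      have hsq : (∑ a', X a') ^ 2 + (∑ a', Y a') ^ 2 ≤
          (∑ a', π (t+1) s' a' * Real.sqrt (uf T p π r b (t+1) s' a')) ^ 2 := by
        have hnn : (0:ℝ) ≤ (∑ a', X a') ^ 2 + (∑ a', Y a') ^ 2 := by positivity
        calc (∑ a', X a') ^ 2 + (∑ a', Y a') ^ 2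
            = Real.sqrt ((∑ a', X a') ^ 2 + (∑ a', Y a') ^ 2) ^ 2 := (Real.sq_sqrt hnn).symm
          _ ≤ _ := pow_le_pow_left₀ (Real.sqrt_nonneg _) hmink 2
      have habs : |vf T p π r (t+1) s' - bbar π b (t+1) s'| ≤ ∑ a', Y a' := by
        rw [vf_sub_bbar]
        refine le_trans (Finset.abs_sum_le_sum_abs _ _) (Finset.sum_le_sum fun a' _ => ?_)
        rw [hY]
        simp only
        rw [abs_mul, abs_of_nonneg ((hπ (t+1) s').1 a')]
      have habs2 : (vf T p π r (t+1) s' - bbar π b (t+1) s') ^ 2 ≤ (∑ a', Y a') ^ 2 := by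
        rw [← sq_abs]
        exact pow_le_pow_left₀ (abs_nonneg _) habs 2
      nlinarith [hsq, habs2]
    have hnn : (0:ℝ) ^ 2 = 0 := by norm_num
    rw [hnn]
    linarith [hsum]
end Final



/-- with the optimal baseline `b*_t(s,a) = q_{π,t}(s,a)`, for every baseline `b`,
every time `t` and every `(s,a)` one has `u^b_{π,t}(s,a) ≥ u^{b*}_{π,t}(s,a)`, and
consequently `Λ^b ⊆ Λ^{b*}`. -/
theorem u_bstar_le_u {S A : Type} [Fintype S] [Fintype A] [Nonempty A]
    (T : ℕ) (hT : 1 ≤ T)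
    (p : S → A → S → ℝ) (hp : IsKernel p)
    (r : S → A → ℝ)
    (π : ℕ → S → A → ℝ) (hπ : IsPolicy π)
    (b : ℕ → S → A → ℝ) :
    (∀ (t : ℕ) (s : S) (a : A), t < T →
      uf T p π r (bstar T p π r) t s a ≤ uf T p π r b t s a) ∧
    (∀ μ : ℕ → S → A → ℝ, inLambda T p π r b μ → inLambda T p π r (bstar T p π r) μ) := by
  constructor
  · intro t s a ht
    have h := u_diff T p π r hp hπ b (T - 1 - t) t s a (by omega)
    nlinarith [sq_nonneg (qf T p π r t s a - b t s a)]
  · intro μ hL t s a ht h0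
    have h1 := hL t s a ht h0
    have h2 : uf T p π r (bstar T p π r) t s a ≤ uf T p π r b t s a := by
      have h := u_diff T p π r hp hπ b (T - 1 - t) t s a (by omega)
      nlinarith [sq_nonneg (qf T p π r t s a - b t s a)]
    have h3 : 0 ≤ uf T p π r (bstar T p π r) t s a := by
      have hk := (key T p π r (bstar T p π r) hp hπ (T - 1 - t) t s (by omega)).1 a
      have hz : qf T p π r t s a - bstar T p π r t s a = 0 := sub_self _
      rw [hz] at hk
      simpa using hk
    rcases mul_eq_zero.1 h1 with hπ0 | hu0
    · rw [hπ0, zero_mul]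
    · have h4 : uf T p π r (bstar T p π r) t s a = 0 := le_antisymm (hu0 ▸ h2) h3
      rw [h4, mul_zero]

end DOpt
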